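/- Every explanation tree yields an offline justification: Let Π be a ground normal program, X an answer set, p ∈ X, and T' = ⟨V', E'⟩ an explanation tree in the and-or explanation tree for p w.r.t. Π and X such that the labeling l is injective on V'. Then the labeled directed graph G = (V, E) with V = {l(v)⁺ | v an atom vertex of V'} ∪ {⊤} and E containing, for each atom vertex v with (unique) rule-vertex child v': the edge (l(v)⁺, ⊤, +) if B⁺(l(v')) = ∅ (i.e., l(v') is a fact of Π^X), and edges (l(v)⁺, l(v'')⁺, +) for each child v'' of v' otherwise, is an offline justification of p⁺ in Π^X with respect to X and ∅; in particular G has no positive cycle and the support of each node l(v)⁺ in G is a local consistent explanation of l(v)⁺ with respect to (X, ∅). -/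

import Mathlib

/-- A ground normal rule: head atom, positive body atoms, negative body atoms. -/
structure Rule (α : Type) where
  head : α
  pos : Finset α
  neg : Finset α

/-- `Y` is a model of the reduct `Π^X`. -/
def IsModelOfReduct {α : Type} (P : Set (Rule α)) (X Y : Set α) : Prop :=
  ∀ r ∈ P, (∀ a ∈ r.neg, a ∉ X) → ↑r.pos ⊆ Y → r.head ∈ Y

/-- `X` is an answer set of `Π`: a subset-minimal model of the reduct `Π^X`. -/
def IsAnswerSet {α : Type} (P : Set (Rule α)) (X : Set α) : Prop :=
  IsModelOfReduct P X X ∧ ∀ Y ⊆ X, IsModelOfReduct P X Y → Y = X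

/-- Finite rose trees with vertex labels in `L`; a vertex of a tree is identified
with the subtree hanging from it. -/
inductive RTree (L : Type) : Type
  | node : L → List (RTree L) → RTree L

namespace RTree

def label {L : Type} : RTree L → L
  | node l _ => l

def children {L : Type} : RTree L → List (RTree L)
  | node _ cs => cs

/-- The list of all vertices (subtree occurrences) of a tree. -/
def occs {L : Type} : RTree L → List (RTree L)
  | node l cs => node l cs :: (cs.attach.map (fun c => occs c.1)).flatten
decreasing_by
  have := List.sizeOf_lt_of_mem c.2
  simp only [RTree.node.sizeOf_spec]; omega

end RTree

/-- Rule `r` supports atom `p` using atoms in `X` but not in `Z`: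
`H(r) = p`, `B⁺(r) ⊆ X \ Z` and `B⁻(r) ∩ X = ∅`. -/
def Supports {α : Type} (X Z : Set α) (r : Rule α) (p : α) : Prop :=
  r.head = p ∧ ↑r.pos ⊆ X \ Z ∧ ∀ a ∈ r.neg, a ∉ X

/-- `IsAOTNode P X Z t`: `t` is (a node of) the and-or explanation tree w.r.t.
program `P` and answer set `X`, where `Z` is the set of atoms labeling the
ancestor atom vertices.  An atom vertex labeled `p` has one rule-vertex child for
each rule of `P` supporting `p` using atoms in `X` but not in `insert p Z` (and
only such children), and has at least one child (so that every leaf is a rule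
vertex); a rule vertex labeled `r` has one atom-vertex child for each atom of
`B⁺(r)` (and only such children). -/
inductive IsAOTNode {α : Type} (P : Set (Rule α)) (X : Set α) :
    Set α → RTree (α ⊕ Rule α) → Prop
  | atom {Z : Set α} {p : α} {cs : List (RTree (α ⊕ Rule α))}
      (hp : p ∈ X) (hne : cs ≠ [])
      (hcomplete : ∀ r ∈ P, Supports X (insert p Z) r p →
        ∃ c ∈ cs, RTree.label c = Sum.inr r)
      (hsound : ∀ c ∈ cs,
        ∃ r ∈ P, Supports X (insert p Z) r p ∧ RTree.label c = Sum.inr r)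
      (hrec : ∀ c ∈ cs, IsAOTNode P X (insert p Z) c) :
      IsAOTNode P X Z (.node (.inl p) cs)
  | rule {Z : Set α} {r : Rule α} {cs : List (RTree (α ⊕ Rule α))}
      (hcomplete : ∀ a ∈ r.pos, ∃ c ∈ cs, RTree.label c = Sum.inl a)
      (hsound : ∀ c ∈ cs, ∃ a ∈ r.pos, RTree.label c = Sum.inl a)
      (hrec : ∀ c ∈ cs, IsAOTNode P X Z c) :
      IsAOTNode P X Z (.node (.inr r) cs)

/-- `SolOf S T`: `S` is an explanation tree (solution subtree) in the and-or tree
`T`: it has the same root label, each atom (or-) vertex of `S` keeps exactly one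
of the children it has in `T`, and each rule (and-) vertex keeps all of its
children. -/
inductive SolOf {α ρ : Type} : RTree (α ⊕ ρ) → RTree (α ⊕ ρ) → Prop
  | atom {a : α} {cs : List (RTree (α ⊕ ρ))} {c s : RTree (α ⊕ ρ)} :
      c ∈ cs → SolOf s c → SolOf (.node (.inl a) [s]) (.node (.inl a) cs)
  | rule {r : ρ} {cs ss : List (RTree (α ⊕ ρ))} :
      List.Forall₂ SolOf ss cs → SolOf (.node (.inr r) ss) (.node (.inr r) cs)

/-- The Gelfond–Lifschitz reduct `Π^X`. -/
def reduct {α : Type} (P : Set (Rule α)) (X : Set α) : Set (Rule α) :=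
  {r' | ∃ r ∈ P, (∀ a ∈ r.neg, a ∉ X) ∧ r' = ⟨r.head, r.pos, ∅⟩}

/-- Nodes of justification e-graphs: annotated atoms `a⁺`/`a⁻` and the special
sink nodes `assume`, `⊤`, `⊥`. -/
inductive JNode (α : Type) where
  | pos : α → JNode α
  | neg : α → JNode α
  | assume : JNode α
  | top : JNode α
  | bot : JNode α

/-- Labeled edges of an e-graph: (source, target, sign), `true` = `+`, `false` = `−`. -/
abbrev JEdges (α : Type) := Set (JNode α × JNode α × Bool)

/-- The true atoms in the support of a node: targets of positive edges to
positively annotated atoms. -/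
def posSupport {α : Type} (E : JEdges α) (n : JNode α) : Set α :=
  {a | (n, JNode.pos a, true) ∈ E}

/-- The negated atoms in the support of a node: targets of negative edges to
negatively annotated atoms. -/
def negSupport {α : Type} (E : JEdges α) (n : JNode α) : Set α :=
  {a | (n, JNode.neg a, false) ∈ E}

/-- The false atoms in the support of a negative node: targets of positive edges
to negatively annotated atoms. -/
def falseAtomSupport {α : Type} (E : JEdges α) (n : JNode α) : Set α :=
  {a | (n, JNode.neg a, true) ∈ E}

/-- The true atoms occurring negated in the support of a negative node: targets
of negative edges to positively annotated atoms. -/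
def trueNegSupport {α : Type} (E : JEdges α) (n : JNode α) : Set α :=
  {a | (n, JNode.pos a, false) ∈ E}

/-- `(Sa, Sn)` blocks every rule of `P` with head `b`: each such rule has a
positive body atom in `Sa` (assumed false) or a negative body atom in `Sn`
(assumed true). -/
def Blocks {α : Type} (P : Set (Rule α)) (b : α) (Sa Sn : Set α) : Prop :=
  ∀ r ∈ P, r.head = b → ((↑r.pos ∩ Sa).Nonempty ∨ (↑r.neg ∩ Sn).Nonempty)

/-- The support of `b⁺` in the graph with edges `E` is a local consistent
explanation (LCE) of `b⁺` w.r.t. `(X, U)`: either `{assume}`, or the body of a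
rule `r ∈ P` with `H(r) = b`, `B⁺(r) ⊆ X` and `B⁻(r) ⊆ Xᶜ ∪ U` (denoted `{⊤}`
when the body is empty). -/
def LCEpos {α : Type} (P : Set (Rule α)) (X U : Set α) (E : JEdges α) (b : α) : Prop :=
  (JNode.pos b, JNode.assume, true) ∈ E ∨
  ∃ r ∈ P, r.head = b ∧ ↑r.pos ⊆ X ∧ ↑r.neg ⊆ Xᶜ ∪ U ∧
    ((r.pos = ∅ ∧ r.neg = ∅ ∧ (JNode.pos b, JNode.top, true) ∈ E) ∨
     (¬(r.pos = ∅ ∧ r.neg = ∅) ∧ posSupport E (JNode.pos b) = ↑r.pos ∧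
       negSupport E (JNode.pos b) = ↑r.neg))

/-- The support of `b⁻` is an LCE of `b⁻` w.r.t. `(X, U)`: either `{assume}`, or
a minimal set of literals, false w.r.t. `(X, U)`, blocking every rule with head
`b` (denoted `{⊥}` when empty). -/
def LCEneg {α : Type} (P : Set (Rule α)) (X U : Set α) (E : JEdges α) (b : α) : Prop :=
  (JNode.neg b, JNode.assume, false) ∈ E ∨
  (falseAtomSupport E (JNode.neg b) ⊆ Xᶜ ∪ U ∧
   trueNegSupport E (JNode.neg b) ⊆ X ∧
   Blocks P b (falseAtomSupport E (JNode.neg b)) (trueNegSupport E (JNode.neg b)) ∧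
   (∀ Sa' ⊆ falseAtomSupport E (JNode.neg b), ∀ Sn' ⊆ trueNegSupport E (JNode.neg b),
      Blocks P b Sa' Sn' →
      Sa' = falseAtomSupport E (JNode.neg b) ∧ Sn' = trueNegSupport E (JNode.neg b)) ∧
   ((falseAtomSupport E (JNode.neg b) = ∅ ∧ trueNegSupport E (JNode.neg b) = ∅) →
      (JNode.neg b, JNode.bot, true) ∈ E))

/-- `(V, E)` is an offline justification of the annotated atom `b0` w.r.t. the
answer set `X` and the assumption set `U`, for the program `P`: a labeled
directed e-graph in which the only sinks are `assume`, `⊤`, `⊥` (which have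
unique incoming edge signs from each node and no out-going edges), every node is
reachable from `b0`, the support of every annotated atom is an LCE w.r.t.
`(X, U)`, no true atom points to `assume`, an atom `a⁻` points to `assume` iff
`a ∈ U`, and there is no positive cycle (safety). -/
def IsOfflineJust {α : Type} (P : Set (Rule α)) (X U : Set α) (b0 : JNode α)
    (V : Set (JNode α)) (E : JEdges α) : Prop :=
  b0 ∈ V ∧
  (∀ e ∈ E, e.1 ∈ V ∧ e.2.1 ∈ V) ∧
  (∀ n ∈ V, n ≠ JNode.assume → n ≠ JNode.top → n ≠ JNode.bot → ∃ m s, (n, m, s) ∈ E) ∧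
  (∀ m s, (JNode.assume, m, s) ∉ E) ∧
  (∀ m s, (JNode.top, m, s) ∉ E) ∧
  (∀ m s, (JNode.bot, m, s) ∉ E) ∧
  (∀ a : α, (JNode.pos a, JNode.assume, false) ∉ E ∧ (JNode.pos a, JNode.bot, false) ∉ E) ∧
  (∀ a : α, (JNode.neg a, JNode.assume, true) ∉ E ∧ (JNode.neg a, JNode.top, true) ∉ E) ∧
  (∀ n m s, (m = JNode.assume ∨ m = JNode.top ∨ m = JNode.bot) → (n, m, s) ∈ E →
    ∀ m' s', (n, m', s') ∈ E → m' = m ∧ s' = s) ∧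
  (∀ n ∈ V, Relation.ReflTransGen (fun x y => ∃ s, (x, y, s) ∈ E) b0 n) ∧
  (∀ a : α, JNode.pos a ∈ V → a ∈ X ∧ LCEpos P X U E a) ∧
  (∀ a : α, JNode.neg a ∈ V → (a ∉ X ∨ a ∈ U) ∧ LCEneg P X U E a) ∧
  (∀ a : α, (JNode.pos a, JNode.assume, true) ∉ E) ∧
  (∀ a : α, (JNode.neg a, JNode.assume, false) ∈ E ↔ (JNode.neg a ∈ V ∧ a ∈ U)) ∧
  (∀ n, ¬ Relation.TransGen (fun x y => (x, y, true) ∈ E) n n)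

namespace RTree

lemma occs_eq {L : Type} (l : L) (cs : List (RTree L)) :
    occs (node l cs) = node l cs :: (cs.map occs).flatten := by
  rw [occs]
  congr 1
  rw [List.attach_map_val]

lemma mem_occs_node {L : Type} {s' : RTree L} {l : L} {cs : List (RTree L)} :
    s' ∈ occs (node l cs) ↔ s' = node l cs ∨ ∃ c ∈ cs, s' ∈ occs c := by
  simp [occs_eq]

lemma self_mem_occs {L : Type} (t : RTree L) : t ∈ occs t := by
  cases t with
  | node l cs => exact mem_occs_node.2 (Or.inl rfl)

lemma occs_trans {L : Type} : ∀ (t s s' : RTree L), s ∈ t.occs → s' ∈ s.occs → s' ∈ t.occs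
  | node l cs, s, s', hs, hs' => by
    rcases mem_occs_node.1 hs with h | ⟨c, hc, h⟩
    · subst h; exact hs'
    · exact mem_occs_node.2 (Or.inr ⟨c, hc, occs_trans c s s' h hs'⟩)
termination_by t => sizeOf t
decreasing_by
  have := List.sizeOf_lt_of_mem hc
  simp only [RTree.node.sizeOf_spec]; omega

lemma child_mem_occs {L : Type} {t s c : RTree L} (ht : s ∈ t.occs)
    (hc : c ∈ s.children) : c ∈ t.occs := by
  cases s with
  | node l cs =>
    exact occs_trans t _ c ht (mem_occs_node.2 (Or.inr ⟨c, hc, self_mem_occs c⟩))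

end RTree
lemma SolOf.label_eq {α ρ : Type} {s t : RTree (α ⊕ ρ)} (h : SolOf s t) :
    s.label = t.label := by
  cases h <;> rfl

lemma forall₂_right {β γ : Type} {R : β → γ → Prop} :
    ∀ {ss : List β} {cs : List γ}, List.Forall₂ R ss cs → ∀ c ∈ cs, ∃ s ∈ ss, R s c := by
  intro ss cs h
  induction h with
  | nil => intro c hc; cases hc
  | cons h₁ h₂ ih =>
    intro c hc
    rcases List.mem_cons.1 hc with rfl | hc
    · exact ⟨_, List.mem_cons_self, h₁⟩
    · obtain ⟨s, hs, hr⟩ := ih c hc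
      exact ⟨s, List.mem_cons_of_mem _ hs, hr⟩

lemma forall₂_left {β γ : Type} {R : β → γ → Prop} :
    ∀ {ss : List β} {cs : List γ}, List.Forall₂ R ss cs → ∀ s ∈ ss, ∃ c ∈ cs, R s c := by
  intro ss cs h
  induction h with
  | nil => intro s hs; cases hs
  | cons h₁ h₂ ih =>
    intro s hs
    rcases List.mem_cons.1 hs with rfl | hs
    · exact ⟨_, List.mem_cons_self, h₁⟩
    · obtain ⟨c, hc, hr⟩ := ih s hs
      exact ⟨c, List.mem_cons_of_mem _ hc, hr⟩

/-- Every occurrence of a solution subtree is itself a solution subtree of some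
AOT node. -/
lemma sol_occ {α : Type} (P : Set (Rule α)) (X : Set α) :
    ∀ (s : RTree (α ⊕ Rule α)), ∀ {t : RTree (α ⊕ Rule α)} {Z : Set α},
      IsAOTNode P X Z t → SolOf s t → ∀ s' ∈ RTree.occs s,
      ∃ Z' t', IsAOTNode P X Z' t' ∧ SolOf s' t'
  | .node l ss => by
    intro ht hs s' hs'
    rcases RTree.mem_occs_node.1 hs' with h | ⟨c, hc, h⟩
    · exact ⟨_, _, ht, h ▸ hs⟩
    · cases hs with
      | @atom _ _ c₀ s₀ hmem hsol =>
        cases ht with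
        | atom hp hne hcomplete hsound hrec =>
          have hcs : c = s₀ := by simpa using hc
          have hsol' : SolOf c c₀ := by rw [hcs]; exact hsol
          exact sol_occ P X c (hrec _ hmem) hsol' s' h
      | rule hf2 =>
        obtain ⟨c', hc', hsol⟩ := forall₂_left hf2 c hc
        cases ht with
        | rule hcomplete hsound hrec =>
          exact sol_occ P X c (hrec _ hc') hsol s' h
termination_by s => sizeOf s
decreasing_by
  all_goals
    have := List.sizeOf_lt_of_mem hc
    subst_vars
    simp only [RTree.node.sizeOf_spec]
    omega

/-- Shape of an atom-labeled solution occurrence. -/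
lemma atom_shape {α : Type} {P : Set (Rule α)} {X : Set α} {s t : RTree (α ⊕ Rule α)}
    {Z : Set α} {a : α} (ht : IsAOTNode P X Z t) (hs : SolOf s t)
    (hl : RTree.label s = Sum.inl a) :
    ∃ r rcs, s = .node (.inl a) [.node (.inr r) rcs] ∧ a ∈ X ∧ r ∈ P ∧
      Supports X (insert a Z) r a ∧
      (∀ c ∈ rcs, ∃ b ∈ r.pos, RTree.label c = Sum.inl b) ∧
      (∀ b ∈ r.pos, ∃ c ∈ rcs, RTree.label c = Sum.inl b) := by
  cases hs with
  | @atom a' cs c s₀ hmem hsol =>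
    cases hl
    cases ht with
    | atom hp hne hcomplete hsound hrec =>
      obtain ⟨r, hrP, hsupp, hlab⟩ := hsound c hmem
      have hrec' := hrec c hmem
      cases c with
      | node lc ccs =>
        cases hlab
        cases hsol with
        | rule hf2 =>
          cases hrec' with
          | rule hcomplete' hsound' hrec'' =>
            refine ⟨r, _, rfl, hp, hrP, hsupp, ?_, ?_⟩
            · intro c' hc'
              obtain ⟨c'', hc'', hsol''⟩ := forall₂_left hf2 c' hc'
              obtain ⟨b, hb, hl''⟩ := hsound' c'' hc''
              exact ⟨b, hb, (SolOf.label_eq hsol'').trans hl''⟩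
            · intro b hb
              obtain ⟨c'', hc'', hl''⟩ := hcomplete' b hb
              obtain ⟨c', hc', hsol''⟩ := forall₂_right hf2 c'' hc''
              exact ⟨c', hc', (SolOf.label_eq hsol'').trans hl''⟩
  | rule hf2 => cases hl
/-- Every explanation tree yields an offline justification: if `T'` is an
explanation tree (with injective labeling) in the and-or explanation tree for
`p` w.r.t. `Π` and answer set `X`, then the graph whose nodes are `⊤` together
with `l(v)⁺` for the atom vertices `v` of `T'`, and whose edges connect each
`l(v)⁺` either to `⊤` (when the rule labeling the unique rule-vertex child of
`v` is a fact of `Π^X`, i.e. has empty positive body) or positively to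
`l(v'')⁺` for each child `v''` of that rule vertex, is an offline justification
of `p⁺` in `Π^X` with respect to `X` and `∅`; in particular it has no positive
cycle and the support of each of its nodes is an LCE w.r.t. `(X, ∅)`. -/
theorem explanationTree_to_offlineJustification {α : Type} (P : Set (Rule α))
    (X : Set α) (hX : IsAnswerSet P X) (p : α) (hp : p ∈ X)
    (T T' : RTree (α ⊕ Rule α)) (hT : IsAOTNode P X ∅ T)
    (hroot : RTree.label T = Sum.inl p) (hT' : SolOf T' T)
    (hinj : ((RTree.occs T').map RTree.label).Nodup) :
    IsOfflineJust (reduct P X) X ∅ (JNode.pos p)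
      ({n | n = JNode.top ∨
        ∃ a : α, n = JNode.pos a ∧ ∃ t ∈ RTree.occs T', RTree.label t = Sum.inl a})
      ({e | ∃ t ∈ RTree.occs T', ∃ a : α, ∃ r : Rule α,
        ∃ rcs : List (RTree (α ⊕ Rule α)),
          t = RTree.node (Sum.inl a) [RTree.node (Sum.inr r) rcs] ∧
          ((r.pos = ∅ ∧ e = (JNode.pos a, JNode.top, true)) ∨
           (∃ b : α, (∃ c ∈ rcs, RTree.label c = Sum.inl b) ∧
             e = (JNode.pos a, JNode.pos b, true)))}) := by
  classical
  set V : Set (JNode α) := {n | n = JNode.top ∨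
        ∃ a : α, n = JNode.pos a ∧ ∃ t ∈ RTree.occs T', RTree.label t = Sum.inl a} with hVdef
  set E : JEdges α := {e | ∃ t ∈ RTree.occs T', ∃ a : α, ∃ r : Rule α,
        ∃ rcs : List (RTree (α ⊕ Rule α)),
          t = RTree.node (Sum.inl a) [RTree.node (Sum.inr r) rcs] ∧
          ((r.pos = ∅ ∧ e = (JNode.pos a, JNode.top, true)) ∨
           (∃ b : α, (∃ c ∈ rcs, RTree.label c = Sum.inl b) ∧
             e = (JNode.pos a, JNode.pos b, true)))} with hEdef
  have hlabT' : RTree.label T' = Sum.inl p := (SolOf.label_eq hT').trans hroot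
  have huniq : ∀ t1 ∈ T'.occs, ∀ t2 ∈ T'.occs, t1.label = t2.label → t1 = t2 :=
    fun t1 h1 t2 h2 h => List.inj_on_of_nodup_map hinj h1 h2 h
  -- the structural shape of every atom-labeled occurrence
  have hshape : ∀ s ∈ T'.occs, ∀ a : α, s.label = Sum.inl a →
      ∃ r rcs, s = .node (.inl a) [.node (.inr r) rcs] ∧ a ∈ X ∧
        (⟨a, r.pos, ∅⟩ : Rule α) ∈ reduct P X ∧ ↑r.pos ⊆ X ∧
        (∀ c ∈ rcs, ∃ b ∈ r.pos, RTree.label c = Sum.inl b) ∧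
        (∀ b ∈ r.pos, ∃ c ∈ rcs, RTree.label c = Sum.inl b) := by
    intro s hs a hl
    obtain ⟨Z, t, ht, hsol⟩ := sol_occ P X T' hT hT' s hs
    obtain ⟨r, rcs, heq, haX, hrP, hsupp, hsnd, hcmp⟩ := atom_shape ht hsol hl
    obtain ⟨hhead, hposs, hneg⟩ := hsupp
    refine ⟨r, rcs, heq, haX, ?_, ?_, hsnd, hcmp⟩
    · exact ⟨r, hrP, hneg, by rw [hhead]⟩
    · exact fun b hb => ((hposs hb).1)
  -- shape specialized to explicit node form
  have hshape' : ∀ a r rcs,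
      (RTree.node (Sum.inl a) [RTree.node (Sum.inr r) rcs]) ∈ T'.occs →
      a ∈ X ∧ (⟨a, r.pos, ∅⟩ : Rule α) ∈ reduct P X ∧ ↑r.pos ⊆ X ∧
      (∀ c ∈ rcs, ∃ b ∈ r.pos, RTree.label c = Sum.inl b) ∧
      (∀ b ∈ r.pos, ∃ c ∈ rcs, RTree.label c = Sum.inl b) ∧
      (∀ c ∈ rcs, c ∈ T'.occs) := by
    intro a r rcs hmem
    obtain ⟨r', rcs', heq, haX, hred, hpos, hsnd, hcmp⟩ := hshape _ hmem a rfl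
    injection heq with e1 e2
    injection e2 with e3 e4
    injection e3 with e5 e6
    injection e5 with e7
    subst e7; subst e6
    have hch : ∀ c ∈ rcs, c ∈ T'.occs := by
      intro c hc
      have h1 : (RTree.node (Sum.inr r) rcs) ∈ T'.occs :=
        RTree.child_mem_occs hmem (by simp [RTree.children])
      exact RTree.child_mem_occs h1 (by simpa [RTree.children] using hc)
    exact ⟨haX, hred, hpos, hsnd, hcmp, hch⟩
  -- source of every edge
  have hsrc : ∀ x y s, ((x, y, s) : JNode α × JNode α × Bool) ∈ E →
      ∃ a r rcs, x = JNode.pos a ∧ s = true ∧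
        (RTree.node (Sum.inl a) [RTree.node (Sum.inr r) rcs]) ∈ T'.occs ∧
        (y = JNode.top ∨ ∃ b, y = JNode.pos b) := by
    intro x y s he
    obtain ⟨t, ht, a, r, rcs, heq, hd⟩ := he
    subst heq
    rcases hd with ⟨hpos, he⟩ | ⟨b, hb, he⟩ <;>
      simp only [Prod.mk.injEq] at he
    · obtain ⟨rfl, rfl, rfl⟩ := he
      exact ⟨a, r, rcs, rfl, rfl, ht, Or.inl rfl⟩
    · obtain ⟨rfl, rfl, rfl⟩ := he
      exact ⟨a, r, rcs, rfl, rfl, ht, Or.inr ⟨b, rfl⟩⟩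
  -- edge characterization given the unique occurrence of an atom
  have hchar : ∀ a r rcs,
      (RTree.node (Sum.inl a) [RTree.node (Sum.inr r) rcs]) ∈ T'.occs →
      ∀ y s, (((JNode.pos a, y, s) : JNode α × JNode α × Bool) ∈ E ↔
        (s = true ∧ ((r.pos = ∅ ∧ y = JNode.top) ∨ ∃ b ∈ r.pos, y = JNode.pos b))) := by
    intro a r rcs hmem y s
    constructor
    · intro he
      obtain ⟨t, ht, a', r', rcs', heq, hd⟩ := he
      have ha' : a' = a := by
        rcases hd with ⟨_, he⟩ | ⟨b, _, he⟩ <;>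
          simp only [Prod.mk.injEq, JNode.pos.injEq] at he <;>
          exact he.1.symm
      rw [ha'] at heq hd
      have ht' : t = RTree.node (Sum.inl a) [RTree.node (Sum.inr r) rcs] := by
        apply huniq t ht _ hmem
        rw [heq]; rfl
      have heq2 := ht'.symm.trans heq
      injection heq2 with e1 e2
      injection e2 with e3 e4
      injection e3 with e5 e6
      injection e5 with e7
      subst e7; subst e6
      rcases hd with ⟨hpos, he⟩ | ⟨b, ⟨c, hc, hlc⟩, he⟩ <;>
        simp only [Prod.mk.injEq, JNode.pos.injEq] at he
      · exact ⟨he.2.2, Or.inl ⟨hpos, he.2.1⟩⟩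
      · obtain ⟨b', hb', hlb'⟩ := (hshape' a r rcs hmem).2.2.2.1 c hc
        have hbb : b = b' := by rw [hlc] at hlb'; injection hlb'
        exact ⟨he.2.2, Or.inr ⟨b', hb', by rw [he.2.1, hbb]⟩⟩
    · rintro ⟨rfl, ⟨hpos, rfl⟩ | ⟨b, hb, rfl⟩⟩
      · exact ⟨_, hmem, a, r, rcs, rfl, Or.inl ⟨hpos, rfl⟩⟩
      · obtain ⟨c, hc, hlc⟩ := (hshape' a r rcs hmem).2.2.2.2.1 b hb
        exact ⟨_, hmem, a, r, rcs, rfl, Or.inr ⟨b, ⟨c, hc, hlc⟩, rfl⟩⟩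
  -- reachability within the tree
  have hreach : ∀ n : ℕ, ∀ s ∈ T'.occs, sizeOf s ≤ n → ∀ a : α, s.label = Sum.inl a →
      Relation.ReflTransGen (fun x y => ∃ s, (x, y, s) ∈ E) (JNode.pos a) JNode.top ∧
      (∀ s' ∈ s.occs, ∀ b : α, s'.label = Sum.inl b →
        Relation.ReflTransGen (fun x y => ∃ s, (x, y, s) ∈ E) (JNode.pos a) (JNode.pos b)) := by
    intro n
    induction n with
    | zero =>
      intro s hs hsz
      cases s with
      | node l cs => simp only [RTree.node.sizeOf_spec] at hsz; omega
    | succ n ih =>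
      intro s hs hsz a hl
      obtain ⟨r, rcs, heq, -, -, -, hsnd, hcmp⟩ := hshape s hs a hl
      subst heq
      have hmem := hs
      have hsp := hshape' a r rcs hmem
      have hsub : ∀ c ∈ rcs, c ∈ T'.occs := hsp.2.2.2.2.2
      have hsizec : ∀ c ∈ rcs, sizeOf c ≤ n := by
        intro c hc
        have h1 := List.sizeOf_lt_of_mem hc
        simp only [RTree.node.sizeOf_spec, List.cons.sizeOf_spec, List.nil.sizeOf_spec] at hsz ⊢
        omega
      constructor
      · rcases Finset.eq_empty_or_nonempty r.pos with hpos | ⟨b, hb⟩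
        · exact Relation.ReflTransGen.single
            ⟨true, (hchar a r rcs hmem JNode.top true).2 ⟨rfl, Or.inl ⟨hpos, rfl⟩⟩⟩
        · obtain ⟨c, hc, hlc⟩ := hcmp b hb
          have hstep : ∃ s', ((JNode.pos a, JNode.pos b, s') ∈ E) :=
            ⟨true, (hchar a r rcs hmem (JNode.pos b) true).2 ⟨rfl, Or.inr ⟨b, hb, rfl⟩⟩⟩
          exact Relation.ReflTransGen.head hstep
            ((ih c (hsub c hc) (hsizec c hc) b hlc).1)
      · intro s' hs' b hlb
        rcases RTree.mem_occs_node.1 hs' with h | ⟨c₁, hc₁, h⟩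
        · subst h
          have : a = b := by
            simpa [RTree.label] using hlb
          subst this
          exact Relation.ReflTransGen.refl
        · have hc₁' : c₁ = RTree.node (Sum.inr r) rcs := by simpa using hc₁
          subst hc₁'
          rcases RTree.mem_occs_node.1 h with h2 | ⟨c, hc, h2⟩
          · subst h2; simp [RTree.label] at hlb
          · obtain ⟨b', hb', hlc⟩ := hsnd c hc
            have hstep : ∃ s', ((JNode.pos a, JNode.pos b', s') ∈ E) :=
              ⟨true, (hchar a r rcs hmem (JNode.pos b') true).2 ⟨rfl, Or.inr ⟨b', hb', rfl⟩⟩⟩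
            exact Relation.ReflTransGen.head hstep
              ((ih c (hsub c hc) (hsizec c hc) b' hlc).2 s' h2 b hlb)
  -- no positive cycle: every positive path strictly descends in the tree
  have hchain : ∀ x y : JNode α,
      Relation.TransGen (fun x y => (x, y, true) ∈ E) x y →
      ∀ t ∈ T'.occs, ∀ a : α, x = JNode.pos a → t.label = Sum.inl a →
      y = JNode.top ∨ ∃ t' ∈ T'.occs, sizeOf t' < sizeOf t ∧
        ∃ b : α, y = JNode.pos b ∧ t'.label = Sum.inl b := by
    have hstep : ∀ x y : JNode α, ((x, y, true) ∈ E) →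
        ∀ t ∈ T'.occs, ∀ a : α, x = JNode.pos a → t.label = Sum.inl a →
        y = JNode.top ∨ ∃ t' ∈ T'.occs, sizeOf t' < sizeOf t ∧
          ∃ b : α, y = JNode.pos b ∧ t'.label = Sum.inl b := by
      intro x y he t htm a hx hl
      subst hx
      obtain ⟨r, rcs, heq, -, -, -, hsnd, hcmp⟩ := hshape t htm a hl
      subst heq
      obtain ⟨-, hd⟩ := (hchar a r rcs htm y true).1 he
      rcases hd with ⟨hpos, rfl⟩ | ⟨b, hb, rfl⟩
      · exact Or.inl rfl
      · obtain ⟨c, hc, hlc⟩ := hcmp b hb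
        refine Or.inr ⟨c, (hshape' a r rcs htm).2.2.2.2.2 c hc, ?_, b, rfl, hlc⟩
        have h1 := List.sizeOf_lt_of_mem hc
        simp only [RTree.node.sizeOf_spec, List.cons.sizeOf_spec, List.nil.sizeOf_spec]
        omega
    intro x y h
    induction h with
    | single h => exact hstep _ _ h
    | @tail m k h1 h2 ih =>
      intro t htm a hx hl
      rcases ih t htm a hx hl with rfl | ⟨t', ht', hsz, b, rfl, hlb⟩
      · obtain ⟨a', r', rcs', he, -⟩ := hsrc _ _ _ h2
        cases he
      · rcases hstep _ _ h2 t' ht' b rfl hlb with h | ⟨t'', ht'', hsz', b', rfl, hlb'⟩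
        · exact Or.inl h
        · exact Or.inr ⟨t'', ht'', lt_trans hsz' hsz, b', rfl, hlb'⟩
  have hex : ∀ x y : JNode α, Relation.TransGen (fun x y => (x, y, true) ∈ E) x y →
      ∃ m, (x, m, true) ∈ E := by
    intro x y h
    induction h with
    | single h => exact ⟨_, h⟩
    | tail h1 h2 ih => exact ih
  refine ⟨?_, ?_, ?_, ?_, ?_, ?_, ?_, ?_, ?_, ?_, ?_, ?_, ?_, ?_, ?_⟩
  · -- b0 ∈ V
    exact Or.inr ⟨p, rfl, T', RTree.self_mem_occs T', hlabT'⟩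
  · -- edge endpoints in V
    intro e he
    obtain ⟨t, ht, a, r, rcs, heq, hd⟩ := he
    subst heq
    rcases hd with ⟨hpos, rfl⟩ | ⟨b, ⟨c, hc, hlc⟩, rfl⟩
    · exact ⟨Or.inr ⟨a, rfl, _, ht, rfl⟩, Or.inl rfl⟩
    · exact ⟨Or.inr ⟨a, rfl, _, ht, rfl⟩,
        Or.inr ⟨b, rfl, c, (hshape' a r rcs ht).2.2.2.2.2 c hc, hlc⟩⟩
  · -- non-sink nodes have outgoing edges
    intro n hn h1 h2 h3
    rcases hn with rfl | ⟨a, rfl, t, ht, hl⟩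
    · exact absurd rfl h2
    · obtain ⟨r, rcs, heq, -, -, -, -, -⟩ := hshape t ht a hl
      subst heq
      rcases Finset.eq_empty_or_nonempty r.pos with hpos | ⟨b, hb⟩
      · exact ⟨JNode.top, true, (hchar a r rcs ht _ _).2 ⟨rfl, Or.inl ⟨hpos, rfl⟩⟩⟩
      · exact ⟨JNode.pos b, true, (hchar a r rcs ht _ _).2 ⟨rfl, Or.inr ⟨b, hb, rfl⟩⟩⟩
  · -- no edges out of assume
    intro m s h
    obtain ⟨a, r, rcs, hx, -, -, -⟩ := hsrc _ _ _ h
    simp at hx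
  · -- no edges out of top
    intro m s h
    obtain ⟨a, r, rcs, hx, -, -, -⟩ := hsrc _ _ _ h
    simp at hx
  · -- no edges out of bot
    intro m s h
    obtain ⟨a, r, rcs, hx, -, -, -⟩ := hsrc _ _ _ h
    simp at hx
  · -- no negative edges from positive atoms to assume/bot
    intro a
    constructor
    · intro h
      obtain ⟨a2, r2, rcs2, -, hs, -, -⟩ := hsrc _ _ _ h
      simp at hs
    · intro h
      obtain ⟨a2, r2, rcs2, -, hs, -, -⟩ := hsrc _ _ _ h
      simp at hs
  · -- no positive edges from negative atoms to assume/top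
    intro a
    constructor
    · intro h
      obtain ⟨a2, r2, rcs2, hx, -, -, -⟩ := hsrc _ _ _ h
      simp at hx
    · intro h
      obtain ⟨a2, r2, rcs2, hx, -, -, -⟩ := hsrc _ _ _ h
      simp at hx
  · -- uniqueness of sink edges
    intro n m s hm he m' s' he'
    obtain ⟨a, r, rcs, rfl, rfl, hocc, -⟩ := hsrc _ _ _ he
    obtain ⟨-, hd⟩ := (hchar a r rcs hocc m true).1 he
    rcases hd with ⟨hpos, rfl⟩ | ⟨b, hb, rfl⟩
    · obtain ⟨a2, r2, rcs2, hx2, rfl, -, -⟩ := hsrc _ _ _ he'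
      injection hx2 with h; subst h
      obtain ⟨-, hd'⟩ := (hchar a r rcs hocc m' true).1 he'
      rcases hd' with ⟨-, rfl⟩ | ⟨b, hb, rfl⟩
      · exact ⟨rfl, rfl⟩
      · rw [hpos] at hb; simp at hb
    · rcases hm with h | h | h <;> simp [h] at hb ⊢ <;> cases h
  · -- reachability from b0
    intro n hn
    rcases hn with rfl | ⟨a, rfl, t, ht, hl⟩
    · exact (hreach (sizeOf T') T' (RTree.self_mem_occs T') le_rfl p hlabT').1
    · exact (hreach (sizeOf T') T' (RTree.self_mem_occs T') le_rfl p hlabT').2 t ht a hl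
  · -- positive atoms: membership and LCE
    intro a ha
    rcases ha with h | ⟨a', he, t, ht, hl⟩
    · simp at h
    · injection he with h; subst h
      obtain ⟨r, rcs, heq, haX, hred, hposX, hsnd, hcmp⟩ := hshape t ht _ hl
      subst heq
      refine ⟨haX, Or.inr ⟨⟨a, r.pos, ∅⟩, hred, rfl, hposX, by simp, ?_⟩⟩
      rcases Finset.eq_empty_or_nonempty r.pos with hpos | hne
      · exact Or.inl ⟨hpos, rfl, (hchar a r rcs ht _ _).2 ⟨rfl, Or.inl ⟨hpos, rfl⟩⟩⟩
      · refine Or.inr ⟨?_, ?_, ?_⟩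
        · rintro ⟨h1, -⟩
          rw [show ((⟨a, r.pos, ∅⟩ : Rule α).pos = r.pos) from rfl] at h1
          rw [h1] at hne; simp at hne
        · ext b
          simp only [posSupport, Set.mem_setOf_eq, Finset.coe_mem, Finset.mem_coe]
          constructor
          · intro h
            obtain ⟨-, hd⟩ := (hchar a r rcs ht _ _).1 h
            rcases hd with ⟨-, h2⟩ | ⟨b', hb', h2⟩
            · simp at h2
            · injection h2 with hh; subst hh; exact hb'
          · intro hb
            exact (hchar a r rcs ht _ _).2 ⟨rfl, Or.inr ⟨b, hb, rfl⟩⟩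
        · ext b
          simp only [negSupport, Set.mem_setOf_eq, Finset.coe_empty, Set.mem_empty_iff_false,
            iff_false]
          intro h
          obtain ⟨a2, r2, rcs2, -, hs, -, -⟩ := hsrc _ _ _ h
          simp at hs
  · -- negative atoms: none in V
    intro a ha
    rcases ha with h | ⟨a', h, -⟩ <;> simp at h
  · -- positive atoms never point to assume
    intro a h
    obtain ⟨a2, r2, rcs2, -, -, -, hd⟩ := hsrc _ _ _ h
    rcases hd with h2 | ⟨b, h2⟩ <;> simp at h2
  · -- negative assume edges iff assumption
    intro a
    constructor
    · intro h
      obtain ⟨a2, r2, rcs2, hx, -, -, -⟩ := hsrc _ _ _ h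
      simp at hx
    · rintro ⟨-, h⟩
      exact absurd h (Set.notMem_empty a)
  · -- no positive cycles
    intro n hcyc
    obtain ⟨m, hm⟩ := hex n n hcyc
    obtain ⟨a, r, rcs, rfl, -, hocc, -⟩ := hsrc _ _ _ hm
    rcases hchain _ _ hcyc _ hocc a rfl rfl with h | ⟨t', ht', hsz, b, hb, hlb⟩
    · simp at h
    · injection hb with hab; subst hab
      have heq := huniq t' ht' _ hocc (by rw [hlb]; rfl)
      rw [heq] at hsz
      exact lt_irrefl _ hsz
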